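/- Let (a_j)_{j ≥ 0} be a sequence of complex numbers with |a_j| < 1 for all j. For n ≥ 0 define B_n(z) = ∏_{0 ≤ j < n} (z − a_j)/(1 − conj(a_j)·z) and φ_n(z) = B_n(z) · √(1−|a_n|²)/(1 − conj(a_n)·z). Then the functions φ_n form an orthonormal system on the unit circle: for all m, n ≥ 0, (1/2π) ∫_{0}^{2π} φ_n(e^{iθ}) · conj(φ_m(e^{iθ})) dθ equals 1 if m = n and 0 otherwise. -/

import Mathlib

open Complex Real MeasureTheory ComplexConjugate

/-- Cauchy integral formula engine, phrased for `∫ θ in 0..2π`. -/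
lemma mt_engine (F : ℂ → ℂ) (w : ℂ) (hw : w ∈ Metric.ball (0:ℂ) 1)
    (hF : DifferentiableOn ℂ F (Metric.closedBall 0 1)) (g : ℝ → ℂ)
    (hg : ∀ θ : ℝ, g θ =
      Complex.exp ((θ:ℂ) * I) * I *
        ((Complex.exp ((θ:ℂ) * I) - w)⁻¹ * F (Complex.exp ((θ:ℂ) * I)))) :
    (∫ θ : ℝ in (0:ℝ)..(2*π), g θ) = (2 * (π:ℂ) * I) * F w := by
  have h := hF.circleIntegral_sub_inv_smul hw
  simp only [circleIntegral, deriv_circleMap, circleMap, ofReal_one, one_mul, zero_add,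
    smul_eq_mul] at h
  rw [← h]
  apply intervalIntegral.integral_congr
  intro θ _
  rw [hg θ]

lemma mt_conj_int (f : ℝ → ℂ) :
    (∫ θ : ℝ in (0:ℝ)..(2*π), conj (f θ)) = conj (∫ θ : ℝ in (0:ℝ)..(2*π), f θ) := by
  rw [intervalIntegral.intervalIntegral_eq_integral_uIoc,
    intervalIntegral.intervalIntegral_eq_integral_uIoc, integral_conj]
  split_ifs <;> simp

set_option maxHeartbeats 1600000 in
theorem malmquist_takenaka_torus_orthonormal (a : ℕ → ℂ) (ha : ∀ j, ‖a j‖ < 1)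
    (B : ℕ → ℂ → ℂ)
    (hB : ∀ n z, B n z = ∏ j ∈ Finset.range n, (z - a j) / (1 - conj (a j) * z))
    (φ : ℕ → ℂ → ℂ)
    (hφ : ∀ n z, φ n z =
      B n z * (Real.sqrt (1 - ‖a n‖ ^ 2) : ℂ) / (1 - conj (a n) * z)) :
    ∀ m n : ℕ,
      (1 / (2 * (π : ℂ))) *
          ∫ θ : ℝ in (0 : ℝ)..(2 * π),
            φ n (Complex.exp ((θ : ℂ) * I)) * conj (φ m (Complex.exp ((θ : ℂ) * I))) =
        if m = n then 1 else 0 := by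
  have hπ : (π : ℂ) ≠ 0 := by exact_mod_cast Real.pi_ne_zero
  -- nonvanishing of `1 - conj (a j) * w` on the closed unit ball
  have hball : ∀ (j : ℕ) (w : ℂ), ‖w‖ ≤ 1 → 1 - conj (a j) * w ≠ 0 := by
    intro j w hw h
    have h1 : (1 : ℂ) = conj (a j) * w := sub_eq_zero.mp h
    have h2 := congrArg (‖·‖) h1
    simp only [norm_one, norm_mul, Complex.norm_conj] at h2
    have : ‖a j‖ * ‖w‖ < 1 := by
      calc ‖a j‖ * ‖w‖ ≤ ‖a j‖ * 1 := by
            exact mul_le_mul_of_nonneg_left hw (norm_nonneg _)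
        _ < 1 := by simpa using ha j
    rw [← h2] at this; exact lt_irrefl 1 this
  have hz1 : ∀ (j : ℕ) (z : ℂ), ‖z‖ = 1 → 1 - conj (a j) * z ≠ 0 :=
    fun j z hz => hball j z hz.le
  have hz2 : ∀ (j : ℕ) (z : ℂ), ‖z‖ = 1 → z - a j ≠ 0 := by
    intro j z hz h
    rw [sub_eq_zero] at h
    rw [h] at hz
    exact absurd hz (ne_of_lt (ha j))
  have hzne : ∀ z : ℂ, ‖z‖ = 1 → z ≠ 0 := by
    intro z hz h; rw [h] at hz; simp at hz
  have haa : ∀ k : ℕ, 1 - conj (a k) * a k ≠ 0 := by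
    intro k
    exact hball k (a k) (ha k).le
  have hzc : ∀ z : ℂ, ‖z‖ = 1 → conj z = z⁻¹ := by
    intro z hz
    have h1 : conj z * z = 1 := by
      rw [mul_comm, Complex.mul_conj]
      norm_cast
      rw [Complex.normSq_eq_norm_sq, hz]; norm_num
    exact eq_inv_of_mul_eq_one_left h1
  have hbconj : ∀ (j : ℕ) (z : ℂ), ‖z‖ = 1 →
      conj ((z - a j) / (1 - conj (a j) * z)) = (1 - conj (a j) * z) / (z - a j) := by
    intro j z hz
    have hzn := hzne z hz
    rw [map_div₀, map_sub, map_sub, map_mul, map_one, conj_conj, hzc z hz]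
    rw [show z⁻¹ - conj (a j) = (1 - conj (a j) * z) * z⁻¹ by field_simp [hzn],
      show (1 : ℂ) - a j * z⁻¹ = (z - a j) * z⁻¹ by field_simp [hzn]]
    rw [mul_div_mul_right _ _ (inv_ne_zero hzn)]
  have hc2 : ∀ k : ℕ, ((Real.sqrt (1 - ‖a k‖ ^ 2) : ℝ) : ℂ) *
      ((Real.sqrt (1 - ‖a k‖ ^ 2) : ℝ) : ℂ) = 1 - conj (a k) * a k := by
    intro k
    rw [← Complex.ofReal_mul, Real.mul_self_sqrt (by
      have : ‖a k‖ ^ 2 < 1 := by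
        have := ha k
        nlinarith [norm_nonneg (a k)]
      linarith)]
    rw [mul_comm, Complex.mul_conj]
    rw [Complex.normSq_eq_norm_sq]
    push_cast
    ring
  have hphiconj : ∀ (k : ℕ) (z : ℂ), ‖z‖ = 1 →
      conj (φ k z) = (∏ j ∈ Finset.range k, (1 - conj (a j) * z) / (z - a j)) *
        ((Real.sqrt (1 - ‖a k‖ ^ 2) : ℝ) : ℂ) * (z / (z - a k)) := by
    intro k z hz
    rw [hφ k z, hB k z, map_div₀, map_mul, map_prod, Complex.conj_ofReal,
      map_sub, map_mul, map_one, conj_conj, hzc z hz]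
    rw [Finset.prod_congr rfl (fun j _ => hbconj j z hz)]
    have hzn := hzne z hz
    have h1 : 1 - a k * z⁻¹ = (z - a k) * z⁻¹ := by field_simp
    rw [h1, div_mul_eq_div_div]
    field_simp
    simp only [mul_comm z (conj _)]
    ring
  have hcancel : ∀ (k : ℕ) (z : ℂ), ‖z‖ = 1 →
      (∏ j ∈ Finset.range k, (z - a j) / (1 - conj (a j) * z)) *
        (∏ j ∈ Finset.range k, (1 - conj (a j) * z) / (z - a j)) = 1 := by
    intro k z hz
    rw [← Finset.prod_mul_distrib]
    apply Finset.prod_eq_one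
    intro j _
    rw [div_mul_div_comm, div_eq_one_iff_eq (mul_ne_zero (hz1 j z hz) (hz2 j z hz))]
    ring
  -- the off-diagonal case, `m < n`
  have key0 : ∀ m n : ℕ, m < n →
      (∫ θ : ℝ in (0 : ℝ)..(2 * π),
        φ n (Complex.exp ((θ : ℂ) * I)) * conj (φ m (Complex.exp ((θ : ℂ) * I)))) = 0 := by
    intro m n hmn
    set cm : ℂ := ((Real.sqrt (1 - ‖a m‖ ^ 2) : ℝ) : ℂ) with hcm
    set cn : ℂ := ((Real.sqrt (1 - ‖a n‖ ^ 2) : ℝ) : ℂ) with hcn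
    set F : ℂ → ℂ := fun w => -I * w * ((cn * cm) *
      (∏ j ∈ Finset.Ico (m+1) n, (w - a j) / (1 - conj (a j) * w)) *
      ((1 - conj (a m) * w)⁻¹ * (1 - conj (a n) * w)⁻¹)) with hFdef
    have hdiff : DifferentiableOn ℂ F (Metric.closedBall 0 1) := by
      have hb : ∀ (j : ℕ) (w : ℂ), w ∈ Metric.closedBall (0:ℂ) 1 → 1 - conj (a j) * w ≠ 0 := by
        intro j w hw
        exact hball j w (by simpa [Metric.mem_closedBall, Complex.dist_eq] using hw)
      apply DifferentiableOn.mul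
      · exact ((differentiable_const _).mul differentiable_id).differentiableOn
      apply DifferentiableOn.mul
      apply DifferentiableOn.mul (differentiableOn_const _)
      · apply DifferentiableOn.fun_finsetProd
        intro j _
        exact DifferentiableOn.div
          ((differentiable_id.sub (differentiable_const _)).differentiableOn)
          (((differentiable_const _).sub ((differentiable_const _).mul
            differentiable_id)).differentiableOn) (fun w hw => hb j w hw)
      · exact DifferentiableOn.mul
          (DifferentiableOn.inv (((differentiable_const _).sub ((differentiable_const _).mul
            differentiable_id)).differentiableOn) (fun w hw => hb m w hw))
          (DifferentiableOn.inv (((differentiable_const _).sub ((differentiable_const _).mul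
            differentiable_id)).differentiableOn) (fun w hw => hb n w hw))
    have h := mt_engine F 0 (by simp) hdiff
      (fun θ => φ n (Complex.exp ((θ : ℂ) * I)) * conj (φ m (Complex.exp ((θ : ℂ) * I))))
      (by
        intro θ
        beta_reduce
        set z : ℂ := Complex.exp ((θ : ℂ) * I) with hzdef
        have hz : ‖z‖ = 1 := Complex.norm_exp_ofReal_mul_I θ
        have hzn := hzne z hz
        have step1 : φ n z * conj (φ m z) =
            ((∏ j ∈ Finset.range m, (z - a j) / (1 - conj (a j) * z)) *
              (∏ j ∈ Finset.range m, (1 - conj (a j) * z) / (z - a j))) *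
            (((z - a m) / (1 - conj (a m) * z)) *
              (∏ j ∈ Finset.Ico (m+1) n, (z - a j) / (1 - conj (a j) * z)) *
              cn * cm * (z / (z - a m)) / (1 - conj (a n) * z)) := by
          rw [hφ n z, hphiconj m z hz, hB n z,
            ← Finset.prod_range_mul_prod_Ico _ hmn.le,
            Finset.prod_eq_prod_Ico_succ_bot hmn]
          ring
        have hQ : (∏ x ∈ Finset.Ico (m+1) n, (1 - conj (a x) * z)) ≠ 0 :=
          Finset.prod_ne_zero_iff.mpr (fun x _ => hz1 x z hz)
        rw [step1, hcancel m z hz, one_mul, sub_zero, hFdef]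
        beta_reduce
        rw [show ∀ X : ℂ, z * I * (z⁻¹ * (-I * z * X)) = z * X from by
          intro X
          rw [show z * I * (z⁻¹ * (-I * z * X)) = (I * -I) * ((z⁻¹ * z) * (z * X)) by ring,
            show I * -I = 1 by simp [Complex.I_mul_I], inv_mul_cancel₀ hzn]
          ring]
        field_simp [hz1 m z hz, hz1 n z hz, hz2 m z hz, hQ])
    have hF0 : F 0 = 0 := by rw [hFdef]; ring
    rw [h, hF0, mul_zero]
  -- main case split
  intro m n
  rcases lt_trichotomy m n with hmn | hmn | hmn
  · rw [if_neg (by omega), key0 m n hmn, mul_zero]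
  · subst hmn
    rw [if_pos rfl]
    set c : ℂ := ((Real.sqrt (1 - ‖a m‖ ^ 2) : ℝ) : ℂ) with hc
    set F : ℂ → ℂ := fun w => (1 - conj (a m) * a m) * (-I) * (1 - conj (a m) * w)⁻¹ with hFdef
    have hdiff : DifferentiableOn ℂ F (Metric.closedBall 0 1) := by
      apply DifferentiableOn.mul (differentiableOn_const _)
      exact DifferentiableOn.inv (((differentiable_const _).sub ((differentiable_const _).mul
        differentiable_id)).differentiableOn)
        (fun w hw => hball m w (by simpa [Metric.mem_closedBall, Complex.dist_eq] using hw))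
    have hw : a m ∈ Metric.ball (0:ℂ) 1 := by
      simpa [Metric.mem_ball, Complex.dist_eq] using ha m
    have h := mt_engine F (a m) hw hdiff
      (fun θ => φ m (Complex.exp ((θ : ℂ) * I)) * conj (φ m (Complex.exp ((θ : ℂ) * I))))
      (by
        intro θ
        beta_reduce
        set z : ℂ := Complex.exp ((θ : ℂ) * I) with hzdef
        have hz : ‖z‖ = 1 := Complex.norm_exp_ofReal_mul_I θ
        have step1 : φ m z * conj (φ m z) =
            ((∏ j ∈ Finset.range m, (z - a j) / (1 - conj (a j) * z)) *
              (∏ j ∈ Finset.range m, (1 - conj (a j) * z) / (z - a j))) *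
            (c * c * z / (1 - conj (a m) * z) / (z - a m)) := by
          rw [hphiconj m z hz, hφ m z, hB m z]
          ring
        rw [step1, hcancel m z hz, one_mul, hc2 m, hFdef]
        beta_reduce
        rw [show ∀ X : ℂ, z * I * ((z - a m)⁻¹ * ((1 - conj (a m) * a m) * -I * X)) =
            z * (z - a m)⁻¹ * ((1 - conj (a m) * a m) * X) from by
          intro X
          rw [show z * I * ((z - a m)⁻¹ * ((1 - conj (a m) * a m) * -I * X)) =
              (I * -I) * (z * (z - a m)⁻¹ * ((1 - conj (a m) * a m) * X)) by ring,
            show I * -I = 1 by simp [Complex.I_mul_I]]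
          ring]
        ring)
    have hFa : F (a m) = -I := by
      show (1 - conj (a m) * a m) * -I * (1 - conj (a m) * a m)⁻¹ = -I
      rw [mul_comm (1 - conj (a m) * a m) (-I), mul_assoc, mul_inv_cancel₀ (haa m), mul_one]
    rw [h, hFa]
    have h2 : 2 * (π : ℂ) * I * -I = 2 * ↑π := by
      linear_combination (-2 * (π : ℂ)) * Complex.I_mul_I
    rw [h2]
    field_simp
  · rw [if_neg (by omega)]
    have h1 : (∫ θ : ℝ in (0 : ℝ)..(2 * π),
        φ n (Complex.exp ((θ : ℂ) * I)) * conj (φ m (Complex.exp ((θ : ℂ) * I)))) =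
        conj (∫ θ : ℝ in (0 : ℝ)..(2 * π),
          φ m (Complex.exp ((θ : ℂ) * I)) * conj (φ n (Complex.exp ((θ : ℂ) * I)))) := by
      rw [← mt_conj_int]
      apply intervalIntegral.integral_congr
      intro θ _
      simp only [map_mul, conj_conj]
      ring
    rw [h1, key0 n m hmn, map_zero, mul_zero]
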